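/- Let A ∈ SL₂$ be a Clifford matrix and let M be any 2×2 quaternionic matrix. Then pdet(AM) = pdet(M), where the pseudo-determinant of a 2×2 quaternionic matrix [[p,q],[r,s]] is pdet := p*s − r*q. -/

import Mathlib

open Quaternion

noncomputable section

/-- The involution `q* = a + bi + cj - dk` on quaternions (Clifford reversion). -/
def qstar (q : ℍ[ℝ]) : ℍ[ℝ] := ⟨q.re, q.imI, q.imJ, -q.imK⟩

/-- The involution `q' = a - bi - cj + dk` on quaternions. -/
def qprime (q : ℍ[ℝ]) : ℍ[ℝ] := ⟨q.re, -q.imI, -q.imJ, q.imK⟩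

/-- A paravector is an element of `ℝ + ℝi + ℝj`, i.e. a quaternion with zero `k`-component. -/
def IsParavector (q : ℍ[ℝ]) : Prop := q.imK = 0

/-- The quaternion `k`. -/
def qk : ℍ[ℝ] := ⟨0, 0, 0, 1⟩

/-- A quaternionic spinor: a pair `(ξ, η) ≠ (0,0)` with `ξ * conj η` a paravector. -/
def IsSpinor (κ : ℍ[ℝ] × ℍ[ℝ]) : Prop := κ ≠ 0 ∧ IsParavector (κ.1 * star κ.2)

/-- The bracket `{κ₁, κ₂} = ξ₁* η₂ − η₁* ξ₂`. -/
def bracket (κ₁ κ₂ : ℍ[ℝ] × ℍ[ℝ]) : ℍ[ℝ] := qstar κ₁.1 * κ₂.2 - qstar κ₁.2 * κ₂.1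

/-- Right multiplication `κ x = (ξ x, η x)`. -/
def rmul (κ : ℍ[ℝ] × ℍ[ℝ]) (x : ℍ[ℝ]) : ℍ[ℝ] × ℍ[ℝ] := (κ.1 * x, κ.2 * x)

/-- The complementary pair `κ̌ = (η', −ξ')`. -/
def qcheck (κ : ℍ[ℝ] × ℍ[ℝ]) : ℍ[ℝ] × ℍ[ℝ] := (qprime κ.2, -qprime κ.1)

/-- The real inner product on `ℍ²`: `⟨κ₁, κ₂⟩ = Re (ξ₁ ξ̄₂ + η₁ η̄₂)`. -/
def qinner (κ₁ κ₂ : ℍ[ℝ] × ℍ[ℝ]) : ℝ := (κ₁.1 * star κ₂.1 + κ₁.2 * star κ₂.2).re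

/-- The squared norm `|κ|² = |ξ|² + |η|²` on `ℍ²`. -/
def qnsq (κ : ℍ[ℝ] × ℍ[ℝ]) : ℝ := Quaternion.normSq κ.1 + Quaternion.normSq κ.2

/-- The pseudo-determinant of a 2×2 quaternionic matrix: `pdet [[a,b],[c,d]] = a* d − c* b`. -/
def pdet (A : Matrix (Fin 2) (Fin 2) ℍ[ℝ]) : ℍ[ℝ] := qstar (A 0 0) * A 1 1 - qstar (A 1 0) * A 0 1

/-- A Clifford matrix: columns are quaternionic spinors and the pseudo-determinant is 1. -/
def IsClifford (A : Matrix (Fin 2) (Fin 2) ℍ[ℝ]) : Prop :=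
  IsSpinor (A 0 0, A 1 0) ∧ IsSpinor (A 0 1, A 1 1) ∧ pdet A = 1

/-- Matrix-vector action of a 2×2 quaternionic matrix on a column vector in `ℍ²`. -/
def mact (A : Matrix (Fin 2) (Fin 2) ℍ[ℝ]) (κ : ℍ[ℝ] × ℍ[ℝ]) : ℍ[ℝ] × ℍ[ℝ] :=
  (A 0 0 * κ.1 + A 0 1 * κ.2, A 1 0 * κ.1 + A 1 1 * κ.2)

@[simp] lemma qstar_re (q : ℍ[ℝ]) : (qstar q).re = q.re := rfl
@[simp] lemma qstar_imI (q : ℍ[ℝ]) : (qstar q).imI = q.imI := rfl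
@[simp] lemma qstar_imJ (q : ℍ[ℝ]) : (qstar q).imJ = q.imJ := rfl
@[simp] lemma qstar_imK (q : ℍ[ℝ]) : (qstar q).imK = -q.imK := rfl

lemma qstar_mul (x y : ℍ[ℝ]) : qstar (x * y) = qstar y * qstar x := by
  ext <;> simp [Quaternion.re_mul, Quaternion.imI_mul, Quaternion.imJ_mul,
    Quaternion.imK_mul] <;> ring

lemma qstar_add (x y : ℍ[ℝ]) : qstar (x + y) = qstar x + qstar y := by
  ext <;> simp <;> ring

lemma qstar_sub (x y : ℍ[ℝ]) : qstar (x - y) = qstar x - qstar y := by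
  ext <;> simp <;> ring

lemma qstar_one : qstar (1 : ℍ[ℝ]) = 1 := by
  ext <;> simp

lemma qstar_qstar (x : ℍ[ℝ]) : qstar (qstar x) = x := by
  ext <;> simp

lemma para_comm (x y : ℍ[ℝ]) (h : IsParavector (x * star y)) :
    qstar x * y = qstar y * x := by
  have h' : -(x.re * y.imK) + -(x.imI * y.imJ) + x.imJ * y.imI + x.imK * y.re = 0 := by
    simpa [IsParavector, Quaternion.imK_mul, Quaternion.re_star, Quaternion.imI_star,
      Quaternion.imJ_star, Quaternion.imK_star] using h
  ext <;> simp [Quaternion.re_mul, Quaternion.imI_mul, Quaternion.imJ_mul,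
    Quaternion.imK_mul] <;> linarith [h']

lemma pdet_key (a b c d p q r s : ℍ[ℝ])
    (hac : qstar a * c = qstar c * a)
    (hbd : qstar b * d = qstar d * b)
    (hdet : qstar a * d - qstar c * b = 1)
    (hdet' : qstar d * a - qstar b * c = 1) :
    qstar (a * p + b * r) * (c * q + d * s) - qstar (c * p + d * r) * (a * q + b * s)
      = qstar p * s - qstar r * q := by
  have h3 : qstar b * c - qstar d * a = -1 := by
    rw [sub_eq_iff_eq_add] at hdet'
    rw [hdet']; noncomm_ring
  rw [qstar_add, qstar_add, qstar_mul, qstar_mul, qstar_mul, qstar_mul]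
  calc (qstar p * qstar a + qstar r * qstar b) * (c * q + d * s)
        - (qstar p * qstar c + qstar r * qstar d) * (a * q + b * s)
      = qstar p * ((qstar a * c - qstar c * a) * q)
        + qstar p * ((qstar a * d - qstar c * b) * s)
        + qstar r * ((qstar b * c - qstar d * a) * q)
        + qstar r * ((qstar b * d - qstar d * b) * s) := by noncomm_ring
    _ = qstar p * s - qstar r * q := by
        rw [hac, hbd, hdet, h3]; noncomm_ring

/-- The pseudo-determinant is preserved by left multiplication by a Clifford matrix:
`pdet (A M) = pdet M`. -/
theorem pdet_mul_clifford (A M : Matrix (Fin 2) (Fin 2) ℍ[ℝ]) (hA : IsClifford A) :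
    pdet (A * M) = pdet M := by
  obtain ⟨⟨-, h1⟩, ⟨-, h2⟩, h3⟩ := hA
  have hdet : qstar (A 0 0) * A 1 1 - qstar (A 1 0) * A 0 1 = 1 := h3
  have hdet' : qstar (A 1 1) * A 0 0 - qstar (A 0 1) * A 1 0 = 1 := by
    have h4 := congrArg qstar hdet
    rw [qstar_sub, qstar_mul, qstar_mul, qstar_qstar, qstar_qstar, qstar_one] at h4
    exact h4
  show qstar ((A * M) 0 0) * (A * M) 1 1 - qstar ((A * M) 1 0) * (A * M) 0 1
      = qstar (M 0 0) * M 1 1 - qstar (M 1 0) * M 0 1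
  simp only [Matrix.mul_apply, Fin.sum_univ_two]
  exact pdet_key _ _ _ _ _ _ _ _ (para_comm _ _ h1) (para_comm _ _ h2) hdet hdet'
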